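/- Let G be a finite simple graph that is bipartite, and suppose the complement of G is a circle graph, i.e., there is a family of chords of the unit circle in ℝ², indexed by the vertices of G, with pairwise distinct endpoints, such that two distinct vertices are adjacent in the complement of G if and only if the corresponding chords intersect. Then G itself is a circle graph, i.e., there exists a family of chords of the unit circle in ℝ², indexed by the vertices of G, with pairwise distinct endpoints, such that two distinct vertices are adjacent in G if and only if the corresponding chords intersect. -/

import Mathlib

open Real Set

abbrev E2 : Type := EuclideanSpace ℝ (Fin 2)

noncomputable def Fl (p q x : E2) : ℝ :=
  (q 0 - p 0) * (x 1 - p 1) - (q 1 - p 1) * (x 0 - p 0)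

lemma e2_ext {x y : E2} (h0 : x 0 = y 0) (h1 : x 1 = y 1) : x = y := by
  apply PiLp.ext; intro i; fin_cases i <;> assumption

lemma e2_ne {p q : E2} (h : p ≠ q) : ¬ (p 0 = q 0 ∧ p 1 = q 1) := by
  rintro ⟨h0, h1⟩; exact h (e2_ext h0 h1)

lemma unit_coord {x : EuclideanSpace ℝ (Fin 2)} (h : ‖x‖ = 1) : (x 0)^2 + (x 1)^2 = 1 := by
  rw [EuclideanSpace.norm_eq, Fin.sum_univ_two] at h
  have h2 : (‖x 0‖^2 + ‖x 1‖^2) = 1 := by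
    have := Real.sq_sqrt (by positivity : (0:ℝ) ≤ ‖x 0‖^2 + ‖x 1‖^2)
    rw [h] at this; linarith
  rw [← sq_abs (x 0), ← sq_abs (x 1)]; simpa only [Real.norm_eq_abs] using h2

lemma Fl_comb {p q r w : E2} {s t : ℝ} (hst : s + t = 1) :
    Fl p q (s • r + t • w) = s * Fl p q r + t * Fl p q w := by
  simp only [Fl, PiLp.add_apply, PiLp.smul_apply, smul_eq_mul]
  linear_combination ((q 0 - p 0) * p 1 - (q 1 - p 1) * p 0) * hst

lemma aux_s01 {s : ℝ} (h : s * (s - 1) ≤ 0) : 0 ≤ s ∧ s ≤ 1 := by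
  constructor <;> nlinarith

lemma collinear_unit {p q x : E2} (hp : ‖p‖ = 1) (hq : ‖q‖ = 1) (hpq : p ≠ q)
    (hx2 : (x 0)^2 + (x 1)^2 ≤ 1) (hF : Fl p q x = 0) :
    ∃ s : ℝ, 0 ≤ s ∧ s ≤ 1 ∧ x = (1-s) • p + s • q ∧
      ((x 0)^2 + (x 1)^2 = 1 → x = p ∨ x = q) := by
  have hp2 := unit_coord hp
  have hq2 := unit_coord hq
  have hD : (q 0 - p 0)^2 + (q 1 - p 1)^2 > 0 := by
    rcases lt_or_eq_of_le (by positivity : (0:ℝ) ≤ (q 0 - p 0)^2 + (q 1 - p 1)^2) with h | h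
    · exact h
    · exfalso; apply e2_ne hpq
      constructor <;> nlinarith [sq_nonneg (q 0 - p 0), sq_nonneg (q 1 - p 1)]
  obtain ⟨s, hs0, hs1⟩ : ∃ s : ℝ, x 0 = p 0 + s * (q 0 - p 0) ∧ x 1 = p 1 + s * (q 1 - p 1) := by
    unfold Fl at hF
    by_cases h0 : q 0 - p 0 = 0
    · have h1 : q 1 - p 1 ≠ 0 := by
        intro h1; rw [h0, h1] at hD; norm_num at hD
      refine ⟨(x 1 - p 1) / (q 1 - p 1), ?_, ?_⟩
      · rw [h0] at hF ⊢
        have : x 0 - p 0 = 0 := by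
          rcases mul_eq_zero.mp (by linarith : (q 1 - p 1) * (x 0 - p 0) = 0) with h | h
          · exact absurd h h1
          · exact h
        linarith
      · rw [div_mul_cancel₀ _ h1]; ring
    · refine ⟨(x 0 - p 0) / (q 0 - p 0), ?_, ?_⟩
      · rw [div_mul_cancel₀ _ h0]; ring
      · field_simp
        linear_combination hF
  have key : (x 0)^2 + (x 1)^2 = 1 + s * (s - 1) * ((q 0 - p 0)^2 + (q 1 - p 1)^2) := by
    rw [hs0, hs1]; linear_combination s * hq2 + (1 - s) * hp2
  have hss : s * (s - 1) ≤ 0 := by nlinarith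
  obtain ⟨hsl, hsr⟩ := aux_s01 hss
  refine ⟨s, hsl, hsr, ?_, ?_⟩
  · apply e2_ext <;> simp only [PiLp.add_apply, PiLp.smul_apply, smul_eq_mul] <;>
      [rw [hs0]; rw [hs1]] <;> ring
  · intro hx1
    have h0 : s * (s - 1) = 0 := by nlinarith
    rcases mul_eq_zero.mp h0 with h | h
    · left
      rw [h] at hs0 hs1
      apply e2_ext
      · rw [hs0]; ring
      · rw [hs1]; ring
    · right
      have hs' : s = 1 := by linarith
      rw [hs'] at hs0 hs1
      apply e2_ext
      · rw [hs0]; ring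
      · rw [hs1]; ring

lemma seg_coord_le {r w x : E2} (hr : ‖r‖ = 1) (hw : ‖w‖ = 1) (hx : x ∈ segment ℝ r w) :
    (x 0)^2 + (x 1)^2 ≤ 1 := by
  have hn : ‖x‖ ≤ 1 := by
    obtain ⟨s, t, hs, ht, hst, hx⟩ := hx
    calc ‖x‖ = ‖s • r + t • w‖ := by rw [hx]
    _ ≤ ‖s • r‖ + ‖t • w‖ := norm_add_le _ _
    _ = s * 1 + t * 1 := by rw [norm_smul, norm_smul, hr, hw,
        Real.norm_of_nonneg hs, Real.norm_of_nonneg ht]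
    _ = 1 := by linarith
  have h1 : (x 0)^2 + (x 1)^2 = ‖x‖^2 := by
    rw [EuclideanSpace.norm_eq, Fin.sum_univ_two, Real.sq_sqrt (by positivity)]
    rw [← sq_abs (x 0), ← sq_abs (x 1)]; norm_num
  rw [h1]
  nlinarith [norm_nonneg x]

lemma seg_inter_iff {p q r w : E2} (hp : ‖p‖ = 1) (hq : ‖q‖ = 1) (hr : ‖r‖ = 1)
    (hw : ‖w‖ = 1) (hpq : p ≠ q) (hrp : r ≠ p) (hrq : r ≠ q) (hwp : w ≠ p) (hwq : w ≠ q) :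
    (segment ℝ p q ∩ segment ℝ r w).Nonempty ↔ Fl p q r * Fl p q w < 0 := by
  have hFr : Fl p q r ≠ 0 := by
    intro h
    obtain ⟨s, -, -, -, hcirc⟩ := collinear_unit hp hq hpq (le_of_eq (unit_coord hr)) h
    rcases hcirc (unit_coord hr) with h' | h'
    · exact hrp h'
    · exact hrq h'
  have hFw : Fl p q w ≠ 0 := by
    intro h
    obtain ⟨s, -, -, -, hcirc⟩ := collinear_unit hp hq hpq (le_of_eq (unit_coord hw)) h
    rcases hcirc (unit_coord hw) with h' | h'
    · exact hwp h'
    · exact hwq h'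
  constructor
  · -- intersection nonempty → opposite signs
    rintro ⟨x, hx1, hx2⟩
    obtain ⟨s, t, hs, ht, hst, hxe⟩ := hx1
    obtain ⟨s', t', hs', ht', hst', hxe'⟩ := hx2
    have hFx : Fl p q x = 0 := by
      rw [← hxe, Fl_comb hst]
      have h1 : Fl p q p = 0 := by unfold Fl; ring
      have h2 : Fl p q q = 0 := by unfold Fl; ring
      rw [h1, h2]; ring
    have hFx' : Fl p q x = s' * Fl p q r + t' * Fl p q w := by
      rw [← hxe', Fl_comb hst']
    have hzero : s' * Fl p q r + t' * Fl p q w = 0 := by rw [← hFx', hFx]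
    rcases hFr.lt_or_gt with h | h <;> rcases hFw.lt_or_gt with h' | h'
    · exfalso
      have h1 : s' * Fl p q r ≤ 0 := mul_nonpos_of_nonneg_of_nonpos hs' h.le
      have h2 : t' * Fl p q w ≤ 0 := mul_nonpos_of_nonneg_of_nonpos ht' h'.le
      have h3 : s' * Fl p q r = 0 := by linarith
      have h4 : t' * Fl p q w = 0 := by linarith
      have h5 : s' = 0 := by
        rcases mul_eq_zero.mp h3 with h5 | h5
        · exact h5
        · exact absurd h5 hFr
      have h6 : t' = 0 := by
        rcases mul_eq_zero.mp h4 with h6 | h6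
        · exact h6
        · exact absurd h6 hFw
      rw [h5, h6] at hst'; norm_num at hst'
    · exact mul_neg_of_neg_of_pos h h'
    · exact mul_neg_of_pos_of_neg h h'
    · exfalso
      have h1 : 0 ≤ s' * Fl p q r := mul_nonneg hs' h.le
      have h2 : 0 ≤ t' * Fl p q w := mul_nonneg ht' h'.le
      have h3 : s' * Fl p q r = 0 := by linarith
      have h4 : t' * Fl p q w = 0 := by linarith
      have h5 : s' = 0 := by
        rcases mul_eq_zero.mp h3 with h5 | h5
        · exact h5
        · exact absurd h5 hFr
      have h6 : t' = 0 := by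
        rcases mul_eq_zero.mp h4 with h6 | h6
        · exact h6
        · exact absurd h6 hFw
      rw [h5, h6] at hst'; norm_num at hst'
  · -- opposite signs → intersection
    intro hlt
    set A := Fl p q r with hA
    set B := Fl p q w with hB
    have hAB : A - B ≠ 0 := by
      intro h
      have hab : A = B := by linarith
      rw [hab] at hlt
      nlinarith [mul_self_nonneg B]
    set t := A / (A - B) with htdef
    have ht0 : 0 ≤ t ∧ t ≤ 1 := by
      rcases hFr.lt_or_gt with h | h <;> rcases hFw.lt_or_gt with h' | h'
      · exfalso; nlinarith
      · have htalt : t = (-A) / (-A + B) := by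
          rw [htdef, show A - B = -(-A + B) by ring, div_neg, ← neg_div]
        rw [htalt]
        constructor
        · exact div_nonneg (by linarith) (by linarith)
        · rw [div_le_one (by linarith)]; linarith
      · rw [htdef]
        constructor
        · exact div_nonneg (by linarith) (by linarith)
        · rw [div_le_one (by linarith)]; linarith
      · exfalso; nlinarith
    set x := (1 - t) • r + t • w with hxdef
    have hxseg : x ∈ segment ℝ r w := ⟨1 - t, t, by linarith [ht0.1, ht0.2], ht0.1, by ring, rfl⟩
    have hFx : Fl p q x = 0 := by
      rw [hxdef, Fl_comb (by ring : (1 - t) + t = 1), ← hA, ← hB, htdef]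
      field_simp
      ring
    have hx2 : (x 0)^2 + (x 1)^2 ≤ 1 := seg_coord_le hr hw hxseg
    obtain ⟨s, hs0, hs1, hxe, -⟩ := collinear_unit hp hq hpq hx2 hFx
    exact ⟨x, ⟨1 - s, s, by linarith, hs0, by ring, hxe.symm⟩, hxseg⟩


lemma trig_id' (a b c : ℝ) :
    (Real.cos (2*b) - Real.cos (2*a)) * (Real.sin (2*c) - Real.sin (2*a))
      - (Real.sin (2*b) - Real.sin (2*a)) * (Real.cos (2*c) - Real.cos (2*a))
    = 4 * Real.sin (b-a) * Real.sin (c-a) * Real.sin (c-b) := by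
  rw [Real.cos_two_mul', Real.cos_two_mul', Real.cos_two_mul',
      Real.sin_two_mul, Real.sin_two_mul, Real.sin_two_mul,
      Real.sin_sub, Real.sin_sub, Real.sin_sub]
  linear_combination
    (2*Real.sin c*Real.cos c - 4*Real.cos b^2*Real.sin c*Real.cos c - 2*Real.sin b*Real.cos b
      + 4*Real.sin b*Real.cos b*Real.cos c^2) * (Real.sin_sq_add_cos_sq a)
    + (-2*Real.sin c*Real.cos c + 4*Real.cos a^2*Real.sin c*Real.cos c + 2*Real.sin a*Real.cos a
      - 4*Real.sin a*Real.cos a*Real.cos c^2) * (Real.sin_sq_add_cos_sq b)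
    + (2*Real.sin b*Real.cos b - 4*Real.cos a^2*Real.sin b*Real.cos b - 2*Real.sin a*Real.cos a
      + 4*Real.sin a*Real.cos a*Real.cos b^2) * (Real.sin_sq_add_cos_sq c)

lemma trig_id (θ φ ψ : ℝ) :
    (Real.cos φ - Real.cos θ) * (Real.sin ψ - Real.sin θ)
      - (Real.sin φ - Real.sin θ) * (Real.cos ψ - Real.cos θ)
    = 4 * Real.sin ((φ-θ)/2) * Real.sin ((ψ-θ)/2) * Real.sin ((ψ-φ)/2) := by
  have h := trig_id' (θ/2) (φ/2) (ψ/2)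
  rw [show 2*(θ/2)=θ by ring, show 2*(φ/2)=φ by ring, show 2*(ψ/2)=ψ by ring] at h
  rw [show (φ-θ)/2 = φ/2-θ/2 by ring, show (ψ-θ)/2 = ψ/2-θ/2 by ring,
      show (ψ-φ)/2 = ψ/2-φ/2 by ring]
  exact h

noncomputable def pt (θ : ℝ) : E2 := !₂[Real.cos θ, Real.sin θ]

lemma pt_coord0 (θ : ℝ) : pt θ 0 = Real.cos θ := rfl
lemma pt_coord1 (θ : ℝ) : pt θ 1 = Real.sin θ := rfl

lemma norm_pt (θ : ℝ) : ‖pt θ‖ = 1 := by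
  rw [EuclideanSpace.norm_eq]
  simp [pt, Fin.sum_univ_two]

lemma pt_inj {c θ φ : ℝ} (hθ : θ ∈ Set.Ioc c (c + 2*π)) (hφ : φ ∈ Set.Ioc c (c + 2*π))
    (h : pt θ = pt φ) : θ = φ := by
  have hc : Real.cos θ = Real.cos φ := congrFun (congrArg WithLp.ofLp h) 0
  have hs : Real.sin θ = Real.sin φ := congrFun (congrArg WithLp.ofLp h) 1
  have he : Complex.exp (θ * Complex.I) = Complex.exp (φ * Complex.I) := by
    apply Complex.ext
    · rw [Complex.exp_ofReal_mul_I_re, Complex.exp_ofReal_mul_I_re, hc]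
    · rw [Complex.exp_ofReal_mul_I_im, Complex.exp_ofReal_mul_I_im, hs]
  obtain ⟨n, hn⟩ := Complex.exp_eq_exp_iff_exists_int.mp he
  have hn' : (θ : ℂ) = φ + n * (2 * π) := by
    have h2 : (θ : ℂ) * Complex.I = ((φ : ℂ) + n * (2 * π)) * Complex.I := by
      rw [hn]; ring
    exact mul_right_cancel₀ Complex.I_ne_zero h2
  have hr : θ = φ + n * (2 * π) := by exact_mod_cast hn'
  have hb : |θ - φ| < 2 * π := by
    rw [abs_lt]
    constructor <;> [linarith [hθ.1, hθ.2, hφ.1, hφ.2]; linarith [hθ.1, hθ.2, hφ.1, hφ.2]]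
  have : n = 0 := by
    rcases lt_trichotomy (n : ℝ) 0 with h | h | h
    · exfalso
      have : (n : ℝ) ≤ -1 := by exact_mod_cast Int.le_of_lt_add_one (by exact_mod_cast h)
      rw [abs_lt] at hb
      nlinarith [Real.pi_pos, hb.1]
    · exact_mod_cast h
    · exfalso
      have : (1 : ℝ) ≤ n := by exact_mod_cast h
      rw [abs_lt] at hb
      nlinarith [Real.pi_pos, hb.2]
  rw [this] at hr; push_cast at hr; linarith

lemma pt_surj {x : E2} (h : ‖x‖ = 1) : ∃ θ ∈ Set.Ioc (-π) π, pt θ = x := by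
  set z : ℂ := ⟨x 0, x 1⟩ with hz
  have habs : ‖z‖ = 1 := by
    rw [Complex.norm_def, Complex.normSq_mk]
    rw [show x 0 * x 0 + x 1 * x 1 = (x 0)^2 + (x 1)^2 by ring, unit_coord h, Real.sqrt_one]
  have hz0 : z ≠ 0 := by
    intro h0; rw [h0] at habs; simp at habs
  refine ⟨Complex.arg z, Complex.arg_mem_Ioc z, ?_⟩
  apply e2_ext
  · rw [pt_coord0, Complex.cos_arg hz0, habs, div_one]
  · rw [pt_coord1, Complex.sin_arg, habs, div_one]

lemma sin_half_pos {c x y : ℝ} (hx : x ∈ Set.Ioc c (c + 2*π)) (hy : y ∈ Set.Ioc c (c + 2*π))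
    (h : y < x) : 0 < Real.sin ((x - y)/2) := by
  apply Real.sin_pos_of_pos_of_lt_pi
  · linarith
  · have := hx.2; have := hy.1; linarith

lemma sin_half_neg {c x y : ℝ} (hx : x ∈ Set.Ioc c (c + 2*π)) (hy : y ∈ Set.Ioc c (c + 2*π))
    (h : x < y) : Real.sin ((x - y)/2) < 0 := by
  have := sin_half_pos hy hx h
  rw [show (x - y)/2 = -((y - x)/2) by ring, Real.sin_neg]
  linarith

lemma sin_half_same_sign {c x y : ℝ} (hx : x ∈ Set.Ioc c (c + 2*π))
    (hy : y ∈ Set.Ioc c (c + 2*π)) (h : x ≠ y) : 0 < Real.sin ((x - y)/2) * (x - y) := by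
  rcases h.lt_or_gt with h | h
  · have := sin_half_neg hx hy h
    apply mul_pos_of_neg_of_neg this (by linarith)
  · exact mul_pos (sin_half_pos hx hy h) (by linarith)

lemma same_sign_of_mul_pos {x y : ℝ} (h : 0 < x * y) : (x < 0 ↔ y < 0) := by
  constructor <;> intro h' <;> nlinarith

lemma Fl_pt (θ φ ψ : ℝ) :
    Fl (pt θ) (pt φ) (pt ψ)
      = 4 * Real.sin ((φ-θ)/2) * Real.sin ((ψ-θ)/2) * Real.sin ((ψ-φ)/2) := by
  unfold Fl
  rw [pt_coord0, pt_coord0, pt_coord0, pt_coord1, pt_coord1, pt_coord1]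
  exact trig_id θ φ ψ

lemma key {c θ φ ψ ψ' : ℝ} (hθ : θ ∈ Set.Ioc c (c + 2*π)) (hφ : φ ∈ Set.Ioc c (c + 2*π))
    (hψ : ψ ∈ Set.Ioc c (c + 2*π)) (hψ' : ψ' ∈ Set.Ioc c (c + 2*π))
    (hθφ : θ ≠ φ) (hψψ' : ψ ≠ ψ') (h1 : ψ ≠ θ) (h2 : ψ ≠ φ) (h3 : ψ' ≠ θ) (h4 : ψ' ≠ φ) :
    (segment ℝ (pt θ) (pt φ) ∩ segment ℝ (pt ψ) (pt ψ')).Nonempty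
      ↔ (ψ-θ)*(ψ-φ)*(ψ'-θ)*(ψ'-φ) < 0 := by
  have hne : ∀ {a b : ℝ}, a ∈ Set.Ioc c (c + 2*π) → b ∈ Set.Ioc c (c + 2*π) → a ≠ b →
      pt a ≠ pt b := fun ha hb hab h => hab (pt_inj ha hb h)
  rw [seg_inter_iff (norm_pt θ) (norm_pt φ) (norm_pt ψ) (norm_pt ψ')
    (hne hθ hφ hθφ) (hne hψ hθ h1) (hne hψ hφ h2) (hne hψ' hθ h3) (hne hψ' hφ h4)]
  rw [Fl_pt, Fl_pt]
  set K := Real.sin ((φ-θ)/2) with hK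
  set s1 := Real.sin ((ψ-θ)/2)
  set s2 := Real.sin ((ψ-φ)/2)
  set s3 := Real.sin ((ψ'-θ)/2)
  set s4 := Real.sin ((ψ'-φ)/2)
  have hKsgn : 0 < K * (φ - θ) := sin_half_same_sign hφ hθ (Ne.symm hθφ)
  have hKne : K ≠ 0 := by
    intro h0; rw [h0, zero_mul] at hKsgn; exact lt_irrefl 0 hKsgn
  have hK2 : 0 < K^2 := by
    rcases hKne.lt_or_gt with h | h <;> nlinarith
  have hprod : 0 < (s1*s2*s3*s4) * ((ψ-θ)*(ψ-φ)*(ψ'-θ)*(ψ'-φ)) := by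
    have p1 := sin_half_same_sign hψ hθ h1
    have p2 := sin_half_same_sign hψ hφ h2
    have p3 := sin_half_same_sign hψ' hθ h3
    have p4 := sin_half_same_sign hψ' hφ h4
    nlinarith [mul_pos (mul_pos p1 p2) (mul_pos p3 p4)]
  have hiff := same_sign_of_mul_pos hprod
  constructor
  · intro h
    rw [← hiff]
    nlinarith [hK2]
  · intro h
    rw [← hiff] at h
    nlinarith [hK2]


def BtwO {α : Type*} [LT α] (c d x : α) : Prop := (c < x ∧ x < d) ∨ (d < x ∧ x < c)

def ExOne {α : Type*} [LT α] (c d x y : α) : Prop := Xor' (BtwO c d x) (BtwO c d y)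

lemma btw_iff_mul_neg {c d z : ℝ} (h1 : z ≠ c) (h2 : z ≠ d) :
    (z - c) * (z - d) < 0 ↔ BtwO c d z := by
  rw [mul_neg_iff]
  unfold BtwO
  constructor
  · rintro (⟨u, v⟩ | ⟨u, v⟩)
    · exact Or.inl ⟨by linarith, by linarith⟩
    · exact Or.inr ⟨by linarith, by linarith⟩
  · rintro (⟨u, v⟩ | ⟨u, v⟩)
    · exact Or.inl ⟨by linarith, by linarith⟩
    · exact Or.inr ⟨by linarith, by linarith⟩

lemma prodneg_iff {c d x y : ℝ} (hxc : x ≠ c) (hxd : x ≠ d) (hyc : y ≠ c) (hyd : y ≠ d) :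
    (x - c) * (x - d) * (y - c) * (y - d) < 0 ↔ ExOne c d x y := by
  have hx : (x - c) * (x - d) ≠ 0 :=
    mul_ne_zero (sub_ne_zero.mpr hxc) (sub_ne_zero.mpr hxd)
  have hy : (y - c) * (y - d) ≠ 0 :=
    mul_ne_zero (sub_ne_zero.mpr hyc) (sub_ne_zero.mpr hyd)
  rw [show (x - c) * (x - d) * (y - c) * (y - d)
      = ((x - c) * (x - d)) * ((y - c) * (y - d)) by ring, mul_neg_iff]
  unfold ExOne Xor' Xor
  rw [← btw_iff_mul_neg hxc hxd, ← btw_iff_mul_neg hyc hyd]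
  rcases hx.lt_or_gt with hx' | hx' <;> rcases hy.lt_or_gt with hy' | hy' <;>
    simp only [not_lt] <;>
    constructor <;> rintro (⟨u, v⟩ | ⟨u, v⟩) <;>
    first
      | (exact Or.inl ⟨by linarith, by linarith⟩)
      | (exact Or.inr ⟨by linarith, by linarith⟩)
      | linarith

lemma exone_swap1 {α : Type*} [LinearOrder α] (c d x y : α) :
    ExOne c d x y ↔ ExOne d c x y := by
  have h : ∀ z : α, BtwO c d z ↔ BtwO d c z := fun z => or_comm
  unfold ExOne
  rw [h x, h y]

lemma exone_swap2 {α : Type*} [LinearOrder α] (c d x y : α) :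
    ExOne c d x y ↔ ExOne c d y x := by
  unfold ExOne Xor'
  exact or_comm

lemma discIVT (g : ℕ → ℕ) (k m : ℕ)
    (hstep : ∀ i, i < k → g (i+1) ≤ g i + 1 ∧ g i ≤ g (i+1) + 1)
    (hm : (g 0 ≤ m ∧ m ≤ g k) ∨ (g k ≤ m ∧ m ≤ g 0)) : ∃ i, i ≤ k ∧ g i = m := by
  induction k with
  | zero => exact ⟨0, le_refl _, by omega⟩
  | succ k ih =>
    by_cases hb : (g 0 ≤ m ∧ m ≤ g k) ∨ (g k ≤ m ∧ m ≤ g 0)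
    · obtain ⟨i, hi, e⟩ := ih (fun i h => hstep i (by omega)) hb
      exact ⟨i, by omega, e⟩
    · have h1 := hstep k (by omega)
      exact ⟨k+1, le_refl _, by omega⟩

/-- the reflection map on ranks -/
def refl2 (i n : ℕ) (r : ℕ) : ℤ :=
  if i ≤ r ∧ r < i + n then (r : ℤ) - i
  else 2*n - 1 - (if i + n ≤ r then (r : ℤ) - i - n else (r : ℤ) + n - i)

lemma refl2_bound {i n r : ℕ} (hi : i ≤ n) (hr : r < 2*n) :
    0 ≤ refl2 i n r ∧ refl2 i n r < 2*n := by
  unfold refl2; split_ifs <;> omega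

lemma refl2_inj {i n : ℕ} (hi : i ≤ n) {r r' : ℕ} (hr : r < 2*n) (hr' : r' < 2*n)
    (h : refl2 i n r = refl2 i n r') : r = r' := by
  unfold refl2 at h; split_ifs at h <;> omega

lemma refl2_in {i n r : ℕ} (h1 : i ≤ r) (h2 : r < i + n) : refl2 i n r = (r : ℤ) - i := by
  unfold refl2; rw [if_pos ⟨h1, h2⟩]

lemma refl2_high {i n r : ℕ} (h1 : i + n ≤ r) : refl2 i n r = 2*n - 1 - ((r : ℤ) - i - n) := by
  unfold refl2; rw [if_neg (by omega), if_pos h1]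

lemma refl2_low {i n r : ℕ} (h1 : r < i) : refl2 i n r = 2*n - 1 - ((r : ℤ) + n - i) := by
  unfold refl2; rw [if_neg (by omega), if_neg (by omega)]

lemma core_flip {i n : ℕ} (hi : i ≤ n) {pu qu pv qv : ℕ}
    (hpu : i ≤ pu ∧ pu < i + n) (hqu : qu < 2*n ∧ (qu < i ∨ i + n ≤ qu))
    (hpv : i ≤ pv ∧ pv < i + n) (hqv : qv < 2*n ∧ (qv < i ∨ i + n ≤ qv))
    (h1 : pu ≠ pv) (h2 : qu ≠ qv) :
    ExOne (refl2 i n pu) (refl2 i n qu) (refl2 i n pv) (refl2 i n qv)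
      ↔ ¬ ExOne pu qu pv qv := by
  rw [refl2_in hpu.1 hpu.2, refl2_in hpv.1 hpv.2]
  rcases hqu.2 with hu | hu <;> rcases hqv.2 with hv | hv <;>
    [rw [refl2_low hu, refl2_low hv]; rw [refl2_low hu, refl2_high hv];
     rw [refl2_high hu, refl2_low hv]; rw [refl2_high hu, refl2_high hv]] <;>
    simp only [ExOne, Xor', Xor, BtwO] <;> omega

lemma core_noncross {i n : ℕ} {pu qu pv qv : ℕ}
    (hpu : i ≤ pu ∧ pu < i + n) (hqu : i ≤ qu ∧ qu < i + n)
    (hpv : pv < i ∨ i + n ≤ pv) (hqv : qv < i ∨ i + n ≤ qv) :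
    ¬ ExOne pu qu pv qv := by
  simp only [ExOne, Xor', Xor, BtwO]
  omega

lemma all_one {V : Type*} (S : Finset V) (t : V → ℕ)
    (hsum : ∑ v ∈ S, t v = S.card)
    (hno : ¬ ∃ u ∈ S, ∃ v ∈ S, t u = 0 ∧ t v = 2)
    (h2 : ∀ v ∈ S, t v ≤ 2) :
    ∀ v ∈ S, t v = 1 := by
  have hle : ∀ v ∈ S, t v ≤ 1 := by
    intro v hv
    by_contra h
    have htv : t v = 2 := by have := h2 v hv; omega
    have hge : ∀ u ∈ S, 1 ≤ t u := by
      intro u hu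
      by_contra h'
      exact hno ⟨u, hu, v, hv, by omega, htv⟩
    have : ∑ v ∈ S, (fun _ => 1) v < ∑ v ∈ S, t v := by
      apply Finset.sum_lt_sum hge ⟨v, hv, by omega⟩
    simp at this; omega
  intro v hv
  by_contra h
  have htv : t v = 0 := by have := hle v hv; omega
  have : ∑ u ∈ S, t u < ∑ u ∈ S, (fun _ => 1) u := by
    apply Finset.sum_lt_sum hle ⟨v, hv, by omega⟩
  simp at this; omega

open Finset in
lemma window_exists {W : Type*} [Fintype W] [DecidableEq W]
    (R : W → ℕ) (col : W → Prop) [DecidablePred col] (n m : ℕ)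
    (hRlt : ∀ w, R w < 2*n) (hRinj : Function.Injective R)
    (hm : 2*m = (univ.filter col).card) :
    ∃ i ≤ n, (univ.filter (fun w => col w ∧ i ≤ R w ∧ R w < i + n)).card = m := by
  classical
  set χ : ℕ → ℕ := fun j => (univ.filter (fun w => col w ∧ R w = j)).card with hχ
  set f : ℕ → ℕ := fun i => ∑ j ∈ Finset.Ico i (i+n), χ j with hf
  have hχle : ∀ j, χ j ≤ 1 := by
    intro j
    rw [hχ]
    apply Finset.card_le_one.mpr
    intro w hw w' hw'
    simp only [Finset.mem_filter] at hw hw'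
    apply hRinj
    omega
  have hfiber : ∀ (P : W → Prop) (_ : DecidablePred P) (lo hi : ℕ),
      (∀ w, P w → lo ≤ R w ∧ R w < hi) →
      (univ.filter (fun w => P w)).card
        = ∑ j ∈ Finset.Ico lo hi, (univ.filter (fun w => P w ∧ R w = j)).card := by
    intro P hdec lo hi hb
    rw [Finset.card_eq_sum_card_fiberwise (f := fun w => R w) (t := Finset.Ico lo hi)
      (fun x hx => Finset.mem_Ico.mpr (hb x (Finset.mem_filter.mp hx).2))]
    apply Finset.sum_congr rfl
    intro j hj
    congr 1
    rw [Finset.filter_filter]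
  have hstep : ∀ i, f (i+1) + χ i = f i + χ (i+n) := by
    intro i
    have h1 : ∑ j ∈ Finset.Ico i (i+n+1), χ j = ∑ j ∈ Finset.Ico i (i+n), χ j + χ (i+n) :=
      Finset.sum_Ico_succ_top (by omega) χ
    have h2 : ∑ j ∈ Finset.Ico i (i+n+1), χ j = χ i + ∑ j ∈ Finset.Ico (i+1) (i+n+1), χ j :=
      Finset.sum_eq_sum_Ico_succ_bot (by omega) χ
    rw [hf]
    simp only
    rw [show i+1+n = i+n+1 by omega]
    omega
  have hends : f 0 + f n = 2*m := by
    have h2 : ∑ j ∈ Finset.Ico 0 n, χ j + ∑ j ∈ Finset.Ico n (2*n), χ j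
        = ∑ j ∈ Finset.Ico 0 (2*n), χ j :=
      Finset.sum_Ico_consecutive _ (by omega) (by omega)
    have h3 : ∑ j ∈ Finset.Ico 0 (2*n), χ j = 2*m := by
      rw [hm, hfiber col inferInstance 0 (2*n) (fun w _ => ⟨Nat.zero_le _, hRlt w⟩)]
    have h4 : f n = ∑ j ∈ Finset.Ico n (n+n), χ j := rfl
    have h5 : f 0 = ∑ j ∈ Finset.Ico 0 (0+n), χ j := rfl
    rw [h4, h5]
    rw [show (0:ℕ)+n = n by omega, show n+n = 2*n by omega]
    omega
  have hivt : ∃ i, i ≤ n ∧ f i = m := by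
    apply discIVT f n m
    · intro i _
      have := hstep i
      have := hχle i
      have := hχle (i+n)
      omega
    · omega
  obtain ⟨i, hi, hfi⟩ := hivt
  refine ⟨i, hi, ?_⟩
  rw [hfiber (fun w => col w ∧ i ≤ R w ∧ R w < i + n) inferInstance i (i+n)
    (fun w hw => ⟨hw.2.1, hw.2.2⟩)]
  rw [← hfi, hf]
  simp only
  apply Finset.sum_congr rfl
  intro j hj
  rw [Finset.mem_Ico] at hj
  rw [hχ]
  simp only
  congr 1
  apply Finset.filter_congr
  intro w _
  constructor
  · rintro ⟨⟨h1, _⟩, h2⟩; exact ⟨h1, h2⟩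
  · rintro ⟨h1, h2⟩; exact ⟨⟨h1, by omega⟩, h2⟩

lemma card_filter_pair {V : Type*} [Fintype V] [DecidableEq V]
    (P : V ⊕ V → Prop) [DecidablePred P] (v : V) :
    (Finset.univ.filter (fun w => P w ∧ Sum.elim id id w = v)).card
      = (if P (Sum.inl v) then 1 else 0) + (if P (Sum.inr v) then 1 else 0) := by
  have hset : Finset.univ.filter (fun w => P w ∧ Sum.elim id id w = v)
      = ({Sum.inl v, Sum.inr v} : Finset (V ⊕ V)).filter P := by
    ext w
    simp only [Finset.mem_filter, Finset.mem_univ, true_and, Finset.mem_insert,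
      Finset.mem_singleton]
    cases w <;> simp <;> tauto
  rw [hset, Finset.filter_insert, Finset.filter_singleton]
  by_cases h1 : P (Sum.inl v) <;> by_cases h2 : P (Sum.inr v) <;> simp [h1, h2]

lemma card_filter_double {V : Type*} [Fintype V] [DecidableEq V]
    (p : V → Prop) [DecidablePred p] :
    (Finset.univ.filter (fun w : V ⊕ V => p (Sum.elim id id w))).card
      = 2 * (Finset.univ.filter p).card := by
  classical
  rw [Finset.card_eq_sum_card_fiberwise (f := Sum.elim id id) (t := Finset.univ)
    (fun x _ => Finset.mem_univ _)]
  have h : ∀ v ∈ Finset.univ,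
      ((Finset.univ.filter (fun w : V ⊕ V => p (Sum.elim id id w))).filter
        (fun w => Sum.elim id id w = v)).card = 2 * (if p v then 1 else 0) := by
    intro v _
    rw [Finset.filter_filter, card_filter_pair (fun w => p (Sum.elim id id w)) v]
    simp only [Sum.elim_inl, Sum.elim_inr, id_eq]
    by_cases hp : p v <;> simp [hp]
  rw [Finset.sum_congr rfl h, ← Finset.mul_sum]
  congr 1
  exact (Finset.card_filter _ _).symm

open Finset in
lemma card_window {W : Type*} [Fintype W] [DecidableEq W]
    (R : W → ℕ) (n : ℕ) (hRlt : ∀ w, R w < 2*n) (hRinj : Function.Injective R)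
    (hcard : Fintype.card W = 2*n) (i : ℕ) (hi : i ≤ n) :
    (univ.filter (fun w => i ≤ R w ∧ R w < i + n)).card = n := by
  classical
  have hRsurj : ∀ j, j < 2*n → ∃ w, R w = j := by
    intro j hj
    set R' : W → Fin (2*n) := fun w => ⟨R w, hRlt w⟩ with hR'
    have hinj' : Function.Injective R' := by
      intro w w' h
      apply hRinj
      have := congrArg Fin.val h
      exact this
    have hbij : Function.Bijective R' := (Fintype.bijective_iff_injective_and_card R').mpr
      ⟨hinj', by rw [hcard, Fintype.card_fin]⟩
    obtain ⟨w, hw⟩ := hbij.2 ⟨j, hj⟩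
    exact ⟨w, congrArg Fin.val hw⟩
  rw [Finset.card_eq_sum_card_fiberwise (f := fun w => R w) (t := Finset.Ico i (i+n))
    (fun x hx => Finset.mem_Ico.mpr (Finset.mem_filter.mp hx).2)]
  have hone : ∀ j ∈ Finset.Ico i (i+n),
      ((univ.filter (fun w => i ≤ R w ∧ R w < i + n)).filter (fun w => R w = j)).card = 1 := by
    intro j hj
    rw [Finset.mem_Ico] at hj
    obtain ⟨w0, hw0⟩ := hRsurj j (by omega)
    rw [Finset.card_eq_one]
    refine ⟨w0, ?_⟩
    ext w
    simp only [Finset.mem_filter, Finset.mem_univ, true_and, Finset.mem_singleton]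
    constructor
    · rintro ⟨-, h2⟩
      exact hRinj (by omega)
    · rintro rfl
      exact ⟨⟨by omega, by omega⟩, hw0⟩
  rw [Finset.sum_congr rfl hone]
  simp

open Finset in
lemma exactly_one_in_window {V : Type*} [Fintype V] [DecidableEq V]
    (C : V → Fin 2) (P : V ⊕ V → Prop) [DecidablePred P]
    (n : ℕ) (hn : Fintype.card V = n)
    (htot : (univ.filter (fun w => P w)).card = n)
    (h0 : (univ.filter (fun w => C (Sum.elim id id w) = 0 ∧ P w)).card
        = (univ.filter (fun v : V => C v = 0)).card)
    (hno : ∀ u v : V, C u = C v → P (Sum.inl u) → P (Sum.inr u) →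
      ¬ P (Sum.inl v) → ¬ P (Sum.inr v) → False) :
    ∀ v : V, (P (Sum.inl v) ↔ ¬ P (Sum.inr v)) := by
  classical
  set t : V → ℕ := fun v => (if P (Sum.inl v) then 1 else 0) + (if P (Sum.inr v) then 1 else 0)
    with ht
  have hfibv : ∀ (Q : V ⊕ V → Prop) (_ : DecidablePred Q),
      (univ.filter (fun w => Q w)).card
        = ∑ v : V, ((if Q (Sum.inl v) then 1 else 0) + (if Q (Sum.inr v) then 1 else 0)) := by
    intro Q hdec
    rw [Finset.card_eq_sum_card_fiberwise (f := Sum.elim id id) (t := Finset.univ)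
      (fun x _ => Finset.mem_univ _)]
    apply Finset.sum_congr rfl
    intro v _
    rw [Finset.filter_filter]
    exact card_filter_pair Q v
  -- sums per class
  have hsum_class : ∀ k : Fin 2,
      ∑ v ∈ univ.filter (fun v : V => C v = k), t v
        = (univ.filter (fun w => C (Sum.elim id id w) = k ∧ P w)).card := by
    intro k
    rw [hfibv (fun w => C (Sum.elim id id w) = k ∧ P w) inferInstance]
    rw [← Finset.sum_filter_add_sum_filter_not univ (fun v : V => C v = k)]
    have hz : ∑ v ∈ univ.filter (fun v : V => ¬ C v = k),
        ((if C (Sum.elim id id (Sum.inl v)) = k ∧ P (Sum.inl v) then 1 else 0)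
          + (if C (Sum.elim id id (Sum.inr v)) = k ∧ P (Sum.inr v) then 1 else 0)) = 0 := by
      apply Finset.sum_eq_zero
      intro v hv
      rw [Finset.mem_filter] at hv
      simp only [Sum.elim_inl, Sum.elim_inr, id_eq]
      simp [hv.2]
    rw [hz, add_zero]

    apply Finset.sum_congr rfl
    intro v hv
    rw [Finset.mem_filter] at hv
    simp only [Sum.elim_inl, Sum.elim_inr, id_eq, ht]
    congr 1
    · by_cases h : P (Sum.inl v) <;> simp [h, hv.2]
    · by_cases h : P (Sum.inr v) <;> simp [h, hv.2]
  -- total sum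
  have hsum_tot : ∑ v : V, t v = n := by
    rw [← htot, hfibv P inferInstance]
  have hcc : (univ.filter (fun v : V => ¬ C v = 0)) = (univ.filter (fun v : V => C v = 1)) := by
    apply Finset.filter_congr
    intro v _
    constructor
    · intro h
      exact Fin.eq_one_of_ne_zero (C v) h
    · intro h
      rw [h]
      exact one_ne_zero
  have hcard_split : (univ.filter (fun v : V => C v = 0)).card
      + (univ.filter (fun v : V => C v = 1)).card = n := by
    have h' := Finset.card_filter_add_card_filter_not (s := (univ : Finset V))
      (p := fun v : V => C v = 0)
    rw [hcc] at h'
    rw [Finset.card_univ, hn] at h'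
    exact h'
  have hsplit_sum : ∑ v ∈ univ.filter (fun v : V => C v = 0), t v
      + ∑ v ∈ univ.filter (fun v : V => C v = 1), t v = ∑ v : V, t v := by
    rw [← Finset.sum_filter_add_sum_filter_not univ (fun v : V => C v = 0) t]
    congr 1
    rw [hcc]
  -- apply all_one to each class
  have hall : ∀ k : Fin 2, ∀ v ∈ univ.filter (fun v : V => C v = k), t v = 1 := by
    intro k
    apply all_one
    · rw [hsum_class k]
      have hk : k = 0 ∨ k = 1 := by omega
      rcases hk with rfl | rfl
      · rw [h0]
      · have e0 := hsum_class 0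
        have e1 := hsum_class 1
        omega
    · rintro ⟨u, hu, v, hv, hu0, hv2⟩
      rw [Finset.mem_filter] at hu hv
      simp only [ht] at hu0 hv2
      apply hno v u (by rw [hv.2, hu.2])
      · by_contra h; rw [if_neg h] at hv2; split_ifs at hv2 <;> omega
      · by_contra h; rw [if_neg h] at hv2; split_ifs at hv2 <;> omega
      · intro h; rw [if_pos h] at hu0; split_ifs at hu0 <;> omega
      · intro h; rw [if_pos h] at hu0; split_ifs at hu0 <;> omega
    · intro v _
      simp only [ht]
      split_ifs <;> omega
  intro v
  have hv1 : t v = 1 := by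
    have hcv : C v = 0 ∨ C v = 1 := by omega
    rcases hcv with h | h
    · exact hall 0 v (Finset.mem_filter.mpr ⟨Finset.mem_univ v, h⟩)
    · exact hall 1 v (Finset.mem_filter.mpr ⟨Finset.mem_univ v, h⟩)
  simp only [ht] at hv1
  by_cases h1 : P (Sum.inl v) <;> by_cases h2 : P (Sum.inr v) <;>
    simp [h1, h2] at hv1 ⊢

/-- A finite simple graph `G` is a *circle graph* if there is a family of chords of the unit
circle in `ℝ²`, indexed by the vertices of `G` (each chord being the closed segment between
two points `a v` and `b v` of the unit circle), with all `2|V|` endpoints pairwise distinct,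
such that two distinct vertices are adjacent in `G` if and only if the corresponding chords
(closed segments) intersect. -/
def IsCircleGraph {V : Type*} (G : SimpleGraph V) : Prop :=
  ∃ a b : V → EuclideanSpace ℝ (Fin 2),
    (∀ v, ‖a v‖ = 1) ∧ (∀ v, ‖b v‖ = 1) ∧
    Function.Injective (Sum.elim a b) ∧
    ∀ u v : V, u ≠ v →
      (G.Adj u v ↔ (segment ℝ (a u) (b u) ∩ segment ℝ (a v) (b v)).Nonempty)

/-- If a bipartite graph `G` (i.e. `χ(G) ≤ 2`) is the complement of a circle graph,
then `G` is a circle graph. -/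
theorem bipartite_complement_of_circle_graph {V : Type*} [Fintype V] (G : SimpleGraph V)
    (hbip : G.chromaticNumber ≤ 2) (hcompl : IsCircleGraph Gᶜ) :
    IsCircleGraph G := by
  classical
  obtain ⟨a, b, ha1, hb1, hinj, hadj⟩ := hcompl
  have hcol : G.Colorable 2 := by
    rw [← SimpleGraph.chromaticNumber_le_iff_colorable]
    exact_mod_cast hbip
  obtain ⟨C⟩ := hcol
  set n := Fintype.card V with hn
  -- angles
  have hexists : ∀ w : V ⊕ V, ∃ θ ∈ Set.Ioc (-π) π, pt θ = Sum.elim a b w := by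
    intro w
    apply pt_surj
    cases w
    · exact ha1 _
    · exact hb1 _
  choose η hηmem hηpt using hexists
  have hIoc : Set.Ioc (-π : ℝ) π = Set.Ioc (-π) (-π + 2*π) := by
    congr 1; ring
  have hηmem' : ∀ w, η w ∈ Set.Ioc (-π) (-π + 2*π) := fun w => hIoc ▸ hηmem w
  have hηinj : Function.Injective η := by
    intro w w' h
    apply hinj
    rw [← hηpt, ← hηpt, h]
  -- rank map
  set s : Finset ℝ := Finset.univ.image η with hs
  have hcards : s.card = 2*n := by
    rw [hs, Finset.card_image_of_injective _ hηinj, Finset.card_univ, Fintype.card_sum]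
    omega
  set e := s.orderIsoOfFin hcards with he
  set R : V ⊕ V → Fin (2*n) := fun w => e.symm ⟨η w, by
    rw [hs]; exact Finset.mem_image_of_mem _ (Finset.mem_univ w)⟩ with hR
  have hRval : ∀ w, ((e (R w) : ℝ)) = η w := by
    intro w
    rw [hR]
    simp
  have hord : ∀ w w', η w < η w' ↔ (R w : ℕ) < (R w' : ℕ) := by
    intro w w'
    rw [← hRval w, ← hRval w']
    rw [Subtype.coe_lt_coe, OrderIso.lt_iff_lt]
    exact Iff.rfl
  have hRinj : Function.Injective R := by
    intro w w' h
    apply hηinj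
    rw [← hRval w, ← hRval w', h]
  have hRlt : ∀ w, (R w : ℕ) < 2*n := fun w => (R w).isLt
  have hRsurj : Function.Surjective R := by
    have hb2 : Function.Bijective R := (Fintype.bijective_iff_injective_and_card R).mpr
      ⟨hRinj, by rw [Fintype.card_sum, Fintype.card_fin]; omega⟩
    exact hb2.2
  -- rewriting endpoints as pt of angles
  have hA : ∀ u : V, a u = pt (η (Sum.inl u)) := fun u => (hηpt (Sum.inl u)).symm
  have hB : ∀ u : V, b u = pt (η (Sum.inr u)) := fun u => (hηpt (Sum.inr u)).symm
  have hne : ∀ w w' : V ⊕ V, w ≠ w' → η w ≠ η w' := fun w w' h hh => h (hηinj hh)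
  -- old crossing in rank terms
  have holdc : ∀ u v : V, u ≠ v →
      ((segment ℝ (a u) (b u) ∩ segment ℝ (a v) (b v)).Nonempty
        ↔ ExOne ((R (Sum.inl u) : ℕ)) ((R (Sum.inr u) : ℕ))
            ((R (Sum.inl v) : ℕ)) ((R (Sum.inr v) : ℕ))) := by
    intro u v huv
    rw [hA u, hB u, hA v, hB v]
    rw [key (hηmem' (Sum.inl u)) (hηmem' (Sum.inr u)) (hηmem' (Sum.inl v)) (hηmem' (Sum.inr v))
      (hne _ _ (by simp)) (hne _ _ (by simp))
      (hne _ _ (by simpa using huv.symm)) (hne _ _ (by simp))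
      (hne _ _ (by simp)) (hne _ _ (by simpa using huv.symm))]
    rw [prodneg_iff (hne _ _ (by simpa using huv.symm)) (hne _ _ (by simp))
      (hne _ _ (by simp)) (hne _ _ (by simpa using huv.symm))]
    simp only [ExOne, Xor', BtwO, hord]
  have hGc : ∀ u v : V, u ≠ v →
      (Gᶜ.Adj u v ↔ ExOne ((R (Sum.inl u) : ℕ)) ((R (Sum.inr u) : ℕ))
        ((R (Sum.inl v) : ℕ)) ((R (Sum.inr v) : ℕ))) :=
    fun u v huv => (hadj u v huv).trans (holdc u v huv)
  -- find the window
  set m := (Finset.univ.filter (fun v : V => C v = 0)).card with hm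
  have hRinj' : Function.Injective (fun w : V ⊕ V => (R w : ℕ)) := by
    intro w w' h
    exact hRinj (Fin.ext h)
  obtain ⟨i₀, hi₀, hwin⟩ := window_exists (fun w : V ⊕ V => (R w : ℕ))
    (fun w => C (Sum.elim id id w) = 0) n m hRlt hRinj'
    (by rw [hm]; exact (card_filter_double (fun v => C v = 0)).symm)
  have htot := card_window (fun w : V ⊕ V => (R w : ℕ)) n hRlt hRinj'
    (by rw [Fintype.card_sum]; omega) i₀ hi₀
  -- exactly one endpoint of each chord lies in the window
  have hxor : ∀ v : V,
      ((i₀ ≤ (R (Sum.inl v) : ℕ) ∧ (R (Sum.inl v) : ℕ) < i₀ + n)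
        ↔ ¬ (i₀ ≤ (R (Sum.inr v) : ℕ) ∧ (R (Sum.inr v) : ℕ) < i₀ + n)) := by
    apply exactly_one_in_window C
      (fun w => i₀ ≤ (R w : ℕ) ∧ (R w : ℕ) < i₀ + n) n hn.symm htot hwin
    · intro u v hCuv hPu1 hPu2 hPv1 hPv2
      have huv : u ≠ v := fun h => hPv1 (h ▸ hPu1)
      have hGadj : ¬ G.Adj u v := fun h => (C.valid h) hCuv
      have hGcadj : Gᶜ.Adj u v := by
        rw [SimpleGraph.compl_adj]
        exact ⟨huv, hGadj⟩
      have hex := (hGc u v huv).mp hGcadj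
      exact core_noncross hPu1 hPu2 (by omega) (by omega) hex
  -- the new chord configuration
  have hπ := Real.pi_pos
  set δ : ℝ := 2*π / (2*(n:ℝ)+1) with hδ
  have hδpos : 0 < δ := by rw [hδ]; positivity
  set τ : V ⊕ V → ℝ := fun w => -π + ((refl2 i₀ n (R w) + 1 : ℤ) : ℝ) * δ with hτ
  have hbnd : ∀ w, 0 ≤ refl2 i₀ n (R w) ∧ refl2 i₀ n (R w) < 2*n :=
    fun w => refl2_bound hi₀ (hRlt w)
  have hτmem : ∀ w, τ w ∈ Set.Ioc (-π) (-π + 2*π) := by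
    intro w
    obtain ⟨h1, h2⟩ := hbnd w
    constructor
    · have hp : (0:ℝ) < ((refl2 i₀ n (R w) + 1 : ℤ) : ℝ) * δ := by
        apply mul_pos _ hδpos
        have : (0 : ℤ) < refl2 i₀ n (R w) + 1 := by omega
        exact_mod_cast this
      rw [hτ]
      simp only
      linarith
    · rw [hτ]
      simp only
      have hle : ((refl2 i₀ n (R w) + 1 : ℤ) : ℝ) ≤ 2*(n:ℝ)+1 := by
        have h3 : (refl2 i₀ n (R w) + 1 : ℤ) ≤ 2*(n:ℤ)+1 := by omega
        exact_mod_cast h3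
      have hmul : ((refl2 i₀ n (R w) + 1 : ℤ) : ℝ) * δ ≤ (2*(n:ℝ)+1) * δ :=
        mul_le_mul_of_nonneg_right hle hδpos.le
      have heq : (2*(n:ℝ)+1) * δ = 2*π := by
        rw [hδ]
        field_simp
      linarith
  have hτord : ∀ w w', τ w < τ w' ↔ refl2 i₀ n (R w) < refl2 i₀ n (R w') := by
    intro w w'
    rw [hτ]
    simp only
    rw [_root_.add_lt_add_iff_left, mul_lt_mul_iff_of_pos_right hδpos, Int.cast_lt]
    omega
  have hτinj : ∀ w w', τ w = τ w' → w = w' := by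
    intro w w' h
    have e1 := hτord w w'
    have e2 := hτord w' w
    have hrr : refl2 i₀ n (R w) = refl2 i₀ n (R w') := by
      by_contra hc
      rcases lt_or_gt_of_ne hc with hlt | hlt
      · exact absurd h (ne_of_lt (e1.mpr hlt))
      · exact absurd h (ne_of_gt (e2.mpr hlt))
    exact hRinj (Fin.ext (refl2_inj hi₀ (hRlt w) (hRlt w') hrr))
  have hτne : ∀ w w' : V ⊕ V, w ≠ w' → τ w ≠ τ w' := fun w w' h hh => h (hτinj w w' hh)
  -- final construction
  refine ⟨fun v => pt (τ (Sum.inl v)), fun v => pt (τ (Sum.inr v)),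
    fun v => norm_pt _, fun v => norm_pt _, ?_, ?_⟩
  · intro w w' h
    have hw : ∀ w : V ⊕ V, Sum.elim (fun v => pt (τ (Sum.inl v)))
        (fun v => pt (τ (Sum.inr v))) w = pt (τ w) := by
      intro w; cases w <;> rfl
    rw [hw, hw] at h
    exact hτinj w w' (pt_inj (hτmem w) (hτmem w') h)
  · intro u v huv
    have hnew : (segment ℝ (pt (τ (Sum.inl u))) (pt (τ (Sum.inr u)))
        ∩ segment ℝ (pt (τ (Sum.inl v))) (pt (τ (Sum.inr v)))).Nonempty
        ↔ ExOne (refl2 i₀ n (R (Sum.inl u))) (refl2 i₀ n (R (Sum.inr u)))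
            (refl2 i₀ n (R (Sum.inl v))) (refl2 i₀ n (R (Sum.inr v))) := by
      rw [key (hτmem (Sum.inl u)) (hτmem (Sum.inr u)) (hτmem (Sum.inl v)) (hτmem (Sum.inr v))
        (hτne _ _ (by simp)) (hτne _ _ (by simp))
        (hτne _ _ (by simpa using huv.symm)) (hτne _ _ (by simp))
        (hτne _ _ (by simp)) (hτne _ _ (by simpa using huv.symm))]
      rw [prodneg_iff (hτne _ _ (by simpa using huv.symm)) (hτne _ _ (by simp))
        (hτne _ _ (by simp)) (hτne _ _ (by simpa using huv.symm))]
      simp only [ExOne, Xor', BtwO, hτord]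
    have hxu := hxor u
    have hxv := hxor v
    have hrne : ∀ w w' : V ⊕ V, w ≠ w' → (R w : ℕ) ≠ (R w' : ℕ) :=
      fun w w' h hh => h (hRinj (Fin.ext hh))
    have hflip : ExOne (refl2 i₀ n (R (Sum.inl u))) (refl2 i₀ n (R (Sum.inr u)))
            (refl2 i₀ n (R (Sum.inl v))) (refl2 i₀ n (R (Sum.inr v)))
        ↔ ¬ ExOne ((R (Sum.inl u) : ℕ)) ((R (Sum.inr u) : ℕ))
            ((R (Sum.inl v) : ℕ)) ((R (Sum.inr v) : ℕ)) := by
      by_cases h1 : i₀ ≤ (R (Sum.inl u) : ℕ) ∧ (R (Sum.inl u) : ℕ) < i₀ + n <;>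
        by_cases h2 : i₀ ≤ (R (Sum.inl v) : ℕ) ∧ (R (Sum.inl v) : ℕ) < i₀ + n
      · exact core_flip hi₀ h1 ⟨hRlt _, by omega⟩ h2 ⟨hRlt _, by omega⟩
          (hrne _ _ (by simpa using huv)) (hrne _ _ (by simpa using huv))
      · rw [exone_swap2 (refl2 i₀ n (R (Sum.inl u))) (refl2 i₀ n (R (Sum.inr u)))
            (refl2 i₀ n (R (Sum.inl v))) (refl2 i₀ n (R (Sum.inr v))),
          exone_swap2 ((R (Sum.inl u) : ℕ)) ((R (Sum.inr u) : ℕ))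
            ((R (Sum.inl v) : ℕ)) ((R (Sum.inr v) : ℕ))]
        exact core_flip hi₀ h1 ⟨hRlt _, by omega⟩ (by omega) ⟨hRlt _, by omega⟩
          (hrne _ _ (by simpa using huv)) (hrne _ _ (by simpa using huv))
      · rw [exone_swap1 (refl2 i₀ n (R (Sum.inl u))) (refl2 i₀ n (R (Sum.inr u)))
            (refl2 i₀ n (R (Sum.inl v))) (refl2 i₀ n (R (Sum.inr v))),
          exone_swap1 ((R (Sum.inl u) : ℕ)) ((R (Sum.inr u) : ℕ))
            ((R (Sum.inl v) : ℕ)) ((R (Sum.inr v) : ℕ))]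
        exact core_flip hi₀ (by omega) ⟨hRlt _, by omega⟩ h2 ⟨hRlt _, by omega⟩
          (hrne _ _ (by simpa using huv)) (hrne _ _ (by simpa using huv))
      · rw [exone_swap1 (refl2 i₀ n (R (Sum.inl u))) (refl2 i₀ n (R (Sum.inr u)))
            (refl2 i₀ n (R (Sum.inl v))) (refl2 i₀ n (R (Sum.inr v))),
          exone_swap1 ((R (Sum.inl u) : ℕ)) ((R (Sum.inr u) : ℕ))
            ((R (Sum.inl v) : ℕ)) ((R (Sum.inr v) : ℕ)),
          exone_swap2 (refl2 i₀ n (R (Sum.inr u))) (refl2 i₀ n (R (Sum.inl u)))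
            (refl2 i₀ n (R (Sum.inl v))) (refl2 i₀ n (R (Sum.inr v))),
          exone_swap2 ((R (Sum.inr u) : ℕ)) ((R (Sum.inl u) : ℕ))
            ((R (Sum.inl v) : ℕ)) ((R (Sum.inr v) : ℕ))]
        exact core_flip hi₀ (by omega) ⟨hRlt _, by omega⟩ (by omega) ⟨hRlt _, by omega⟩
          (hrne _ _ (by simpa using huv)) (hrne _ _ (by simpa using huv))
    have hgadj : G.Adj u v ↔ ¬ Gᶜ.Adj u v := by
      rw [SimpleGraph.compl_adj]
      constructor
      · intro h hh
        exact hh.2 h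
      · intro h
        by_contra hg
        exact h ⟨huv, hg⟩
    rw [hgadj, hGc u v huv, hnew, hflip]
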